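/- There exists an absolute constant C > 0 such that the following holds. Let X be a finite group and S ⊆ X a normal subset (closed under conjugation), and suppose the Cayley sum graph G = C_Σ(X,S) is non-bipartite. Then h_out ≤ C·β_out, where h_out is the outer vertex isoperimetric constant and β_out is the outer vertex bipartiteness constant of G. -/

import Mathlib

attribute [local instance] Classical.propDecidable
set_option maxHeartbeats 4000000

/-- The outer vertex boundary of a finite set `U`: vertices outside `U` with a neighbor in `U`. -/
noncomputable def outBd {V : Type*} [Fintype V] (Adj : V → V → Prop) (U : Finset V) : Finset V :=
  Finset.univ.filter fun y => y ∉ U ∧ ∃ x ∈ U, Adj x y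

/-- The outer vertex isoperimetric constant: the minimum of `|∂_out U|/|U|` over nonempty sets
`U` with `|U| ≤ |V|/2`. -/
noncomputable def hOut {V : Type*} [Fintype V] (Adj : V → V → Prop) : ℝ :=
  sInf {r : ℝ | ∃ U : Finset V, U.Nonempty ∧ 2 * U.card ≤ Fintype.card V ∧
    r = ((outBd Adj U).card : ℝ) / (U.card : ℝ)}

/-- `I(L)` is the number of vertices of `L` having a neighbor in `L`. -/
noncomputable def II {V : Type*} (Adj : V → V → Prop) (L : Finset V) : ℕ :=
  (L.filter fun x => ∃ y ∈ L, Adj x y).card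

/-- The outer vertex bipartiteness constant `β_out`. -/
noncomputable def betaOut {V : Type*} [Fintype V] (Adj : V → V → Prop) : ℝ :=
  sInf {r : ℝ | ∃ L R : Finset V, Disjoint L R ∧ (L ∪ R).Nonempty ∧
    r = ((II Adj L : ℝ) + (II Adj R : ℝ) + ((outBd Adj (L ∪ R)).card : ℝ)) /
      ((L ∪ R).card : ℝ)}

/-- A graph is bipartite if the vertex set can be partitioned into two parts such that every
edge joins the two parts. -/
def Bipartite {V : Type*} (Adj : V → V → Prop) : Prop :=
  ∃ P : V → Bool, ∀ x y, Adj x y → P x ≠ P y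

section Aux

variable {V : Type*} [Fintype V]

lemma hOut_nonneg (A : V → V → Prop) : 0 ≤ hOut A := by
  apply Real.sInf_nonneg
  rintro r ⟨U, hU, h2, rfl⟩
  positivity

lemma hOut_le (A : V → V → Prop) (T : Finset V) (h1 : T.Nonempty)
    (h2 : 2 * T.card ≤ Fintype.card V) :
    hOut A ≤ ((outBd A T).card : ℝ) / (T.card : ℝ) := by
  apply csInf_le
  · exact ⟨0, by rintro r ⟨U, hU, hU2, rfl⟩; positivity⟩
  · exact ⟨T, h1, h2, rfl⟩

lemma hOut_mul_le (A : V → V → Prop) (T : Finset V) (h1 : T.Nonempty)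
    (h2 : 2 * T.card ≤ Fintype.card V) :
    hOut A * (T.card : ℝ) ≤ ((outBd A T).card : ℝ) := by
  have hpos : (0:ℝ) < (T.card : ℝ) := by exact_mod_cast h1.card_pos
  have h := hOut_le A T h1 h2
  calc hOut A * (T.card:ℝ) ≤ (((outBd A T).card : ℝ)/(T.card:ℝ)) * T.card := by
        exact mul_le_mul_of_nonneg_right h hpos.le
    _ = ((outBd A T).card : ℝ) := by field_simp

end Aux

section Main

variable {X : Type} [Group X] [Fintype X]

lemma symm_mem {S : Finset X} (hS : ∀ x : X, ∀ s ∈ S, x * s * x⁻¹ ∈ S)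
    {x y : X} (h : x * y ∈ S) : y * x ∈ S := by
  have h2 := hS y (x*y) h
  have e : y * (x*y) * y⁻¹ = y * x := by group
  rwa [e] at h2

lemma main_aux (S : Finset X)
    (hS : ∀ x : X, ∀ s ∈ S, x * s * x⁻¹ ∈ S)
    (hnb : ¬ Bipartite (fun x y : X => x * y ∈ S))
    (L R : Finset X) (hdis : Disjoint L R) (hne : (L ∪ R).Nonempty) :
    hOut (fun x y : X => x * y ∈ S) ≤
      400 * (((II (fun x y : X => x * y ∈ S) L : ℝ) + (II (fun x y : X => x * y ∈ S) R : ℝ)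
        + ((outBd (fun x y : X => x * y ∈ S) (L ∪ R)).card : ℝ)) / ((L ∪ R).card : ℝ)) := by
  by_contra hcon
  push_neg at hcon
  set A : X → X → Prop := fun x y => x * y ∈ S with hAdef
  set U : Finset X := L ∪ R with hUdef
  set n : ℕ := Fintype.card X with hndef
  set b : ℕ := II A L + II A R + (outBd A U).card with hbdef
  set h : ℝ := hOut A with hhdef
  have hb_cast : ((II A L : ℝ) + (II A R : ℝ) + ((outBd A U).card : ℝ)) = (b:ℝ) := by
    push_cast [hbdef]; ring
  rw [hb_cast] at hcon
  have h0 : 0 ≤ h := hOut_nonneg A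
  have hu1 : 1 ≤ U.card := hne.card_pos
  have hu0 : (0:ℝ) < (U.card : ℝ) := by exact_mod_cast hu1
  have hb0 : (0:ℝ) ≤ (b:ℝ) := by positivity
  have hpos : 0 < h := lt_of_le_of_lt (by positivity) hcon
  have hmain : 400 * (b:ℝ) < h * U.card := by
    have := (div_lt_iff₀ hu0).mp (by
      have : (400:ℝ) * ((b:ℝ) / U.card) = (400*(b:ℝ))/U.card := by ring
      rw [this] at hcon; exact hcon)
    linarith
  have hun : U.card ≤ n := by
    rw [hndef, ← Finset.card_univ]; exact Finset.card_le_card (Finset.subset_univ U)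
  have hn400 : 400 * (b:ℝ) < h * n := by
    have : h * (U.card:ℝ) ≤ h * n := by
      apply mul_le_mul_of_nonneg_left _ h0; exact_mod_cast hun
    linarith
  have hn1 : 1 ≤ n := by omega
  -- n ≥ 2
  have hn2 : 2 ≤ n := by
    by_contra hlt
    have hn1' : n = 1 := by omega
    have hempty : {r : ℝ | ∃ T : Finset X, T.Nonempty ∧ 2 * T.card ≤ Fintype.card X ∧
        r = ((outBd A T).card : ℝ) / (T.card : ℝ)} = ∅ := by
      rw [Set.eq_empty_iff_forall_notMem]
      rintro r ⟨T, hT, hT2, rfl⟩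
      have := hT.card_pos
      rw [← hndef, hn1'] at hT2
      omega
    have : h = 0 := by
      rw [hhdef, hOut, hempty, Real.sInf_empty]
    linarith
  -- h ≤ 2
  have h2 : h ≤ 2 := by
    obtain ⟨T, hTsub, hTcard⟩ := Finset.exists_subset_card_eq (s := (Finset.univ : Finset X)) (n := n/2)
      (by rw [Finset.card_univ, ← hndef]; omega)
    have hT1 : T.Nonempty := by
      rw [← Finset.card_pos, hTcard]; omega
    have hT2 : 2 * T.card ≤ Fintype.card X := by rw [hTcard, ← hndef]; omega
    have hbd : (outBd A T).card ≤ n - n/2 := by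
      have hsub : outBd A T ⊆ Finset.univ \ T := by
        intro y hy
        simp only [outBd, Finset.mem_filter] at hy
        exact Finset.mem_sdiff.mpr ⟨Finset.mem_univ y, hy.2.1⟩
      calc (outBd A T).card ≤ (Finset.univ \ T).card := Finset.card_le_card hsub
        _ = n - n/2 := by rw [Finset.card_sdiff_of_subset (Finset.subset_univ T), Finset.card_univ,
              ← hndef, hTcard]
    have hle := hOut_le A T hT1 hT2
    rw [← hhdef] at hle
    refine hle.trans ?_
    rw [div_le_iff₀ (by rw [hTcard]; exact_mod_cast Nat.pos_of_ne_zero (by omega))]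
    rw [hTcard]
    have : (n - n/2 : ℕ) ≤ 2 * (n/2) := by omega
    calc ((outBd A T).card : ℝ) ≤ ((n - n/2 : ℕ) : ℝ) := by exact_mod_cast hbd
      _ ≤ ((2 * (n/2) : ℕ) : ℝ) := by exact_mod_cast this
      _ = 2 * ((n/2 : ℕ) : ℝ) := by push_cast; ring
  -- small case
  by_cases hsmall : 2 * U.card ≤ n
  · have hle := hOut_le A U hne (by rw [← hndef]; exact hsmall)
    rw [← hhdef] at hle
    have hbd : ((outBd A U).card : ℝ) ≤ (b:ℝ) := by
      have : (outBd A U).card ≤ b := by rw [hbdef]; omega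
      exact_mod_cast this
    have hle2 : h ≤ (b:ℝ)/U.card := hle.trans (by gcongr)
    have hnn : 0 ≤ (b:ℝ)/U.card := by positivity
    have : 400 * ((b:ℝ)/U.card) < (b:ℝ)/U.card := by
      calc 400 * ((b:ℝ)/U.card) < h := hcon
        _ ≤ (b:ℝ)/U.card := hle2
    linarith
  -- hard case
  push_neg at hsmall
  classical
  set badL : Finset X := L.filter (fun x => ∃ y ∈ L, A x y) with hbadLdef
  set badR : Finset X := R.filter (fun x => ∃ y ∈ R, A x y) with hbadRdef
  set L' : Finset X := L \ badL with hL'def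
  set R' : Finset X := R \ badR with hR'def
  set D : Finset X := badL ∪ badR ∪ outBd A U with hDdef
  set W : Finset X := Finset.univ \ U with hWdef
  set M : Finset X := Finset.univ \ (L' ∪ R') with hMdef
  have hIIL : II A L = badL.card := by rw [hbadLdef, II]; congr
  have hIIR : II A R = badR.card := by rw [hbadRdef, II]; congr
  have hDb : D.card ≤ b := by
    calc D.card ≤ (badL ∪ badR).card + (outBd A U).card := Finset.card_union_le _ _
      _ ≤ badL.card + badR.card + (outBd A U).card :=
          Nat.add_le_add_right (Finset.card_union_le _ _) _
      _ = b := by rw [hbdef, hIIL, hIIR]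
  -- exact neighborhood structure
  have hL'adj : ∀ x ∈ L', ∀ y : X, x * y ∈ S → y ∈ R' ∪ D := by
    intro x hx y hxy
    have hxL : x ∈ L := (Finset.mem_sdiff.mp hx).1
    have hxnb : x ∉ badL := (Finset.mem_sdiff.mp hx).2
    by_cases hyL : y ∈ L
    · exact absurd (Finset.mem_filter.mpr ⟨hxL, ⟨y, hyL, hxy⟩⟩) hxnb
    by_cases hyR : y ∈ R
    · by_cases hyb : y ∈ badR
      · exact Finset.mem_union_right _ (Finset.mem_union_left _ (Finset.mem_union_right _ hyb))
      · exact Finset.mem_union_left _ (Finset.mem_sdiff.mpr ⟨hyR, hyb⟩)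
    · have hyU : y ∉ U := by
        rw [hUdef]; simp [hyL, hyR]
      have : y ∈ outBd A U := by
        simp only [outBd, Finset.mem_filter]
        exact ⟨Finset.mem_univ y, hyU, ⟨x, by rw [hUdef]; exact Finset.mem_union_left _ hxL, hxy⟩⟩
      exact Finset.mem_union_right _ (Finset.mem_union_right _ this)
  have hR'adj : ∀ x ∈ R', ∀ y : X, x * y ∈ S → y ∈ L' ∪ D := by
    intro x hx y hxy
    have hxR : x ∈ R := (Finset.mem_sdiff.mp hx).1
    have hxnb : x ∉ badR := (Finset.mem_sdiff.mp hx).2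
    by_cases hyR : y ∈ R
    · exact absurd (Finset.mem_filter.mpr ⟨hxR, ⟨y, hyR, hxy⟩⟩) hxnb
    by_cases hyL : y ∈ L
    · by_cases hyb : y ∈ badL
      · exact Finset.mem_union_right _ (Finset.mem_union_left _ (Finset.mem_union_left _ hyb))
      · exact Finset.mem_union_left _ (Finset.mem_sdiff.mpr ⟨hyL, hyb⟩)
    · have hyU : y ∉ U := by
        rw [hUdef]; simp [hyL, hyR]
      have : y ∈ outBd A U := by
        simp only [outBd, Finset.mem_filter]
        exact ⟨Finset.mem_univ y, hyU, ⟨x, by rw [hUdef]; exact Finset.mem_union_right _ hxR, hxy⟩⟩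
      exact Finset.mem_union_right _ (Finset.mem_union_right _ this)
  have hLR'disj : Disjoint L' R' := hdis.mono Finset.sdiff_subset Finset.sdiff_subset
  -- S nonempty
  have hSne : S.Nonempty := by
    rcases Finset.eq_empty_or_nonempty S with hS0 | hSn
    · exfalso
      apply hnb
      refine ⟨fun _ => true, ?_⟩
      intro x y hxy
      have hxy' : x * y ∈ S := hxy
      rw [hS0] at hxy'
      simp at hxy'
    · exact hSn
  obtain ⟨s₀, hs₀⟩ := hSne
  -- balance
  have hbal1 : L'.card ≤ R'.card + D.card := by
    have hmap : ∀ x ∈ L', x⁻¹ * s₀ ∈ R' ∪ D := by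
      intro x hx
      apply hL'adj x hx
      have e : x * (x⁻¹ * s₀) = s₀ := by group
      rw [e]; exact hs₀
    calc L'.card ≤ (R' ∪ D).card := by
          apply Finset.card_le_card_of_injOn (fun x => x⁻¹ * s₀) hmap
          intro a _ c _ hac
          simpa using hac
      _ ≤ R'.card + D.card := Finset.card_union_le _ _
  have hbal2 : R'.card ≤ L'.card + D.card := by
    have hmap : ∀ x ∈ R', x⁻¹ * s₀ ∈ L' ∪ D := by
      intro x hx
      apply hR'adj x hx
      have e : x * (x⁻¹ * s₀) = s₀ := by group
      rw [e]; exact hs₀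
    calc R'.card ≤ (L' ∪ D).card := by
          apply Finset.card_le_card_of_injOn (fun x => x⁻¹ * s₀) hmap
          intro a _ c _ hac
          simpa using hac
      _ ≤ L'.card + D.card := Finset.card_union_le _ _
  -- W is small
  set W' : Finset X := W \ outBd A U with hW'def
  have hW'bd : outBd A W' ⊆ outBd A U := by
    intro y hy
    simp only [outBd, Finset.mem_filter] at hy
    obtain ⟨-, hyn, x, hxW', hxy⟩ := hy
    have hxW : x ∈ W := (Finset.mem_sdiff.mp hxW').1
    have hxnb : x ∉ outBd A U := (Finset.mem_sdiff.mp hxW').2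
    have hxU : x ∉ U := (Finset.mem_sdiff.mp hxW).2
    have hyU : y ∉ U := by
      intro hyU
      apply hxnb
      simp only [outBd, Finset.mem_filter]
      exact ⟨Finset.mem_univ x, hxU, ⟨y, hyU, symm_mem hS hxy⟩⟩
    have hyW : y ∈ W := Finset.mem_sdiff.mpr ⟨Finset.mem_univ y, hyU⟩
    by_contra hyout
    exact hyn (Finset.mem_sdiff.mpr ⟨hyW, hyout⟩)
  have hWcard : W.card + U.card = n := by
    rw [hWdef, Finset.card_sdiff_of_subset (Finset.subset_univ U), Finset.card_univ, ← hndef]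
    omega
  have hW'small : h * (W'.card : ℝ) ≤ (b:ℝ) := by
    rcases Finset.eq_empty_or_nonempty W' with hW'e | hW'ne
    · rw [hW'e]; simp
    · have hW'W : W'.card ≤ W.card := Finset.card_le_card Finset.sdiff_subset
      have h2W : 2 * W'.card ≤ Fintype.card X := by rw [← hndef]; omega
      have hmul := hOut_mul_le A W' hW'ne h2W
      rw [← hhdef] at hmul
      have hcb : (outBd A W').card ≤ b := by
        calc (outBd A W').card ≤ (outBd A U).card := Finset.card_le_card hW'bd
          _ ≤ b := by rw [hbdef]; omega
      calc h * (W'.card:ℝ) ≤ ((outBd A W').card : ℝ) := hmul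
        _ ≤ (b:ℝ) := by exact_mod_cast hcb
  -- M bound
  have hMsub : M ⊆ W' ∪ outBd A U ∪ badL ∪ badR := by
    intro z hz
    have hz' := Finset.mem_sdiff.mp hz
    have hzL : z ∉ L' := fun hc => hz'.2 (Finset.mem_union_left _ hc)
    have hzR : z ∉ R' := fun hc => hz'.2 (Finset.mem_union_right _ hc)
    by_cases hzLL : z ∈ L
    · have : z ∈ badL := by
        by_contra hc
        exact hzL (Finset.mem_sdiff.mpr ⟨hzLL, hc⟩)
      exact Finset.mem_union_left _ (Finset.mem_union_right _ this)
    · by_cases hzRR : z ∈ R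
      · have : z ∈ badR := by
          by_contra hc
          exact hzR (Finset.mem_sdiff.mpr ⟨hzRR, hc⟩)
        exact Finset.mem_union_right _ this
      · have hzU : z ∉ U := by rw [hUdef]; simp [hzLL, hzRR]
        have hzW : z ∈ W := Finset.mem_sdiff.mpr ⟨Finset.mem_univ z, hzU⟩
        by_cases hzo : z ∈ outBd A U
        · exact Finset.mem_union_left _ (Finset.mem_union_left _ (Finset.mem_union_right _ hzo))
        · exact Finset.mem_union_left _ (Finset.mem_union_left _ (Finset.mem_union_left _
            (Finset.mem_sdiff.mpr ⟨hzW, hzo⟩)))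
  have hMcard : M.card ≤ W'.card + b := by
    calc M.card ≤ (W' ∪ outBd A U ∪ badL ∪ badR).card := Finset.card_le_card hMsub
      _ ≤ (W' ∪ outBd A U ∪ badL).card + badR.card := Finset.card_union_le _ _
      _ ≤ (W' ∪ outBd A U).card + badL.card + badR.card :=
          Nat.add_le_add_right (Finset.card_union_le _ _) _
      _ ≤ W'.card + (outBd A U).card + badL.card + badR.card := by
          have := Finset.card_union_le W' (outBd A U)
          omega
      _ ≤ W'.card + b := by rw [hbdef, hIIL, hIIR]; omega
  have hMreal : h * (M.card : ℝ) ≤ 3 * (b:ℝ) := by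
    have hc : (M.card:ℝ) ≤ (W'.card:ℝ) + (b:ℝ) := by exact_mod_cast hMcard
    nlinarith [hW'small, h0, h2, hb0, Nat.cast_nonneg (α := ℝ) W'.card]
  -- partition count
  have hLRM : L'.card + R'.card + M.card = n := by
    have hdu : (L' ∪ R').card = L'.card + R'.card := Finset.card_union_of_disjoint hLR'disj
    have : M.card = n - (L' ∪ R').card := by
      rw [hMdef, Finset.card_sdiff_of_subset (Finset.subset_univ _), Finset.card_univ, ← hndef]
    have hle : (L' ∪ R').card ≤ n := by
      rw [hndef, ← Finset.card_univ]; exact Finset.card_le_card (Finset.subset_univ _)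
    omega
  have hzpart : ∀ z : X, z ∈ L' ∨ z ∈ R' ∨ z ∈ M := by
    intro z
    by_cases h1 : z ∈ L'
    · exact Or.inl h1
    by_cases h2 : z ∈ R'
    · exact Or.inr (Or.inl h2)
    refine Or.inr (Or.inr (Finset.mem_sdiff.mpr ⟨Finset.mem_univ z, ?_⟩))
    simp [h1, h2]
  have hpart : ∀ T : Finset X, T.card ≤ (T ∩ L').card + (T ∩ R').card + (T ∩ M).card := by
    intro T
    have hsub : T ⊆ (T ∩ L') ∪ (T ∩ R') ∪ (T ∩ M) := by
      intro z hz
      rcases hzpart z with h1 | h1 | h1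
      · exact Finset.mem_union_left _ (Finset.mem_union_left _ (Finset.mem_inter.mpr ⟨hz, h1⟩))
      · exact Finset.mem_union_left _ (Finset.mem_union_right _ (Finset.mem_inter.mpr ⟨hz, h1⟩))
      · exact Finset.mem_union_right _ (Finset.mem_inter.mpr ⟨hz, h1⟩)
    calc T.card ≤ ((T ∩ L') ∪ (T ∩ R') ∪ (T ∩ M)).card := Finset.card_le_card hsub
      _ ≤ ((T ∩ L') ∪ (T ∩ R')).card + (T ∩ M).card := Finset.card_union_le _ _
      _ ≤ (T ∩ L').card + (T ∩ R').card + (T ∩ M).card :=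
          Nat.add_le_add_right (Finset.card_union_le _ _) _
  -- small test set helper
  have hsmallT : ∀ T : Finset X, 2 * T.card ≤ n → (outBd A T).card ≤ 3 * D.card →
      h * (T.card : ℝ) ≤ 3 * (b:ℝ) := by
    intro T h2T hbdT
    rcases Finset.eq_empty_or_nonempty T with rfl | hTne
    · simp
    · have hmul := hOut_mul_le A T hTne (by rw [← hndef]; exact h2T)
      rw [← hhdef] at hmul
      have : (outBd A T).card ≤ 3 * b := by omega
      calc h * (T.card:ℝ) ≤ ((outBd A T).card : ℝ) := hmul
        _ ≤ 3 * (b:ℝ) := by exact_mod_cast this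
  -- generic boundary lemma for the four mixed sets
  have bdlem : ∀ (g : X) (P Q P₂ Q₂ : Finset X),
      (∀ x ∈ P, ∀ y : X, x * y ∈ S → y ∈ P₂ ∪ D) →
      (∀ x ∈ P₂, ∀ y : X, x * y ∈ S → y ∈ P ∪ D) →
      (∀ x ∈ Q, ∀ y : X, x * y ∈ S → y ∈ Q₂ ∪ D) →
      (∀ x ∈ Q₂, ∀ y : X, x * y ∈ S → y ∈ Q ∪ D) →
      (outBd A ((P ∩ Q.image (fun z => z * g)) ∪ (P₂ ∩ Q₂.image (fun z => g⁻¹ * z)))).card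
        ≤ 3 * D.card := by
    intro g P Q P₂ Q₂ hP hP₂ hQ hQ₂
    have hsub : outBd A ((P ∩ Q.image (fun z => z * g)) ∪ (P₂ ∩ Q₂.image (fun z => g⁻¹ * z))) ⊆
        D ∪ D.image (fun z => g⁻¹ * z) ∪ D.image (fun z => z * g) := by
      intro y hy
      simp only [outBd, Finset.mem_filter] at hy
      obtain ⟨-, hyn, x, hxB, hxy⟩ := hy
      rcases Finset.mem_union.mp hxB with hx1 | hx2
      · obtain ⟨hxP, hxQg⟩ := Finset.mem_inter.mp hx1
        obtain ⟨q, hq, hqe⟩ := Finset.mem_image.mp hxQg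
        have hyP : y ∈ P₂ ∪ D := hP x hxP y hxy
        have hq2 : q * (g * y) ∈ S := by
          have e : q * (g * y) = x * y := by rw [← hqe]; group
          rw [e]; exact hxy
        have hgy : g * y ∈ Q₂ ∪ D := hQ q hq _ hq2
        rcases Finset.mem_union.mp hyP with hyP2 | hyD
        · rcases Finset.mem_union.mp hgy with hgyQ | hgyD
          · exfalso
            apply hyn
            apply Finset.mem_union_right
            refine Finset.mem_inter.mpr ⟨hyP2, ?_⟩
            exact Finset.mem_image.mpr ⟨g * y, hgyQ, by simp⟩
          · apply Finset.mem_union_left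
            apply Finset.mem_union_right
            exact Finset.mem_image.mpr ⟨g * y, hgyD, by simp⟩
        · exact Finset.mem_union_left _ (Finset.mem_union_left _ hyD)
      · obtain ⟨hxP2, hxQ2g⟩ := Finset.mem_inter.mp hx2
        obtain ⟨q, hq, hqe⟩ := Finset.mem_image.mp hxQ2g
        have hyP : y ∈ P ∪ D := hP₂ x hxP2 y hxy
        have hq2 : q * (y * g⁻¹) ∈ S := by
          have e : q * (y * g⁻¹) = g * (x * y) * g⁻¹ := by rw [← hqe]; group
          rw [e]; exact hS g _ hxy
        have hyg : y * g⁻¹ ∈ Q ∪ D := hQ₂ q hq _ hq2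
        rcases Finset.mem_union.mp hyP with hyP1 | hyD
        · rcases Finset.mem_union.mp hyg with hygQ | hygD
          · exfalso
            apply hyn
            apply Finset.mem_union_left
            refine Finset.mem_inter.mpr ⟨hyP1, ?_⟩
            exact Finset.mem_image.mpr ⟨y * g⁻¹, hygQ, by simp⟩
          · apply Finset.mem_union_right
            exact Finset.mem_image.mpr ⟨y * g⁻¹, hygD, by simp⟩
        · exact Finset.mem_union_left _ (Finset.mem_union_left _ hyD)
    calc (outBd A ((P ∩ Q.image (fun z => z * g)) ∪ (P₂ ∩ Q₂.image (fun z => g⁻¹ * z)))).card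
        ≤ (D ∪ D.image (fun z => g⁻¹ * z) ∪ D.image (fun z => z * g)).card :=
          Finset.card_le_card hsub
      _ ≤ (D ∪ D.image (fun z => g⁻¹ * z)).card + (D.image (fun z => z * g)).card :=
          Finset.card_union_le _ _
      _ ≤ D.card + (D.image (fun z => g⁻¹ * z)).card + (D.image (fun z => z * g)).card :=
          Nat.add_le_add_right (Finset.card_union_le _ _) _
      _ ≤ 3 * D.card := by
          have h1 := Finset.card_image_le (s := D) (f := fun z => g⁻¹ * z)
          have h2 := Finset.card_image_le (s := D) (f := fun z => z * g)
          omega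
  -- disjointness of images
  have hdisjimgR : ∀ g : X, Disjoint (L'.image (fun z => z * g)) (R'.image (fun z => z * g)) := by
    intro g
    rw [Finset.disjoint_left]
    intro a haL haR
    obtain ⟨x, hx, hxe⟩ := Finset.mem_image.mp haL
    obtain ⟨y, hy, hye⟩ := Finset.mem_image.mp haR
    have hxy : x = y := by
      have h' : x * g = y * g := by rw [hxe, hye]
      exact mul_right_cancel h'
    exact Finset.disjoint_left.mp hLR'disj hx (hxy ▸ hy)
  have hdisjimgL : ∀ g : X, Disjoint (L'.image (fun z => g⁻¹ * z)) (R'.image (fun z => g⁻¹ * z)) := by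
    intro g
    rw [Finset.disjoint_left]
    intro a haL haR
    obtain ⟨x, hx, hxe⟩ := Finset.mem_image.mp haL
    obtain ⟨y, hy, hye⟩ := Finset.mem_image.mp haR
    have hxy : x = y := by
      have : g⁻¹ * x = g⁻¹ * y := by rw [hxe, hye]
      exact mul_left_cancel this
    exact Finset.disjoint_left.mp hLR'disj hx (hxy ▸ hy)
  -- the key dichotomy
  have key : ∀ g : X,
      (h * (((L' ∩ R'.image (fun z => z * g))).card : ℝ) ≤ 3 * b ∧
       h * (((R' ∩ L'.image (fun z => z * g))).card : ℝ) ≤ 3 * b) ∨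
      (h * (((L' ∩ L'.image (fun z => z * g))).card : ℝ) ≤ 3 * b ∧
       h * (((R' ∩ R'.image (fun z => z * g))).card : ℝ) ≤ 3 * b) := by
    intro g
    set B1 := (L' ∩ L'.image (fun z => z * g)) ∪ (R' ∩ R'.image (fun z => g⁻¹ * z)) with hB1
    set B2 := (L' ∩ R'.image (fun z => z * g)) ∪ (R' ∩ L'.image (fun z => g⁻¹ * z)) with hB2
    set B3 := (R' ∩ R'.image (fun z => z * g)) ∪ (L' ∩ L'.image (fun z => g⁻¹ * z)) with hB3
    set B4 := (R' ∩ L'.image (fun z => z * g)) ∪ (L' ∩ R'.image (fun z => g⁻¹ * z)) with hB4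
    have hB1bd := bdlem g L' L' R' R' hL'adj hR'adj hL'adj hR'adj
    have hB2bd := bdlem g L' R' R' L' hL'adj hR'adj hR'adj hL'adj
    have hB3bd := bdlem g R' R' L' L' hR'adj hL'adj hR'adj hL'adj
    have hB4bd := bdlem g R' L' L' R' hR'adj hL'adj hL'adj hR'adj
    have hd12 : Disjoint B1 B2 := by
      rw [Finset.disjoint_left]
      intro a ha hb
      rcases Finset.mem_union.mp ha with h1 | h1 <;> rcases Finset.mem_union.mp hb with hh2 | hh2
      · exact Finset.disjoint_left.mp (hdisjimgR g) (Finset.mem_inter.mp h1).2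
          (Finset.mem_inter.mp hh2).2
      · exact Finset.disjoint_left.mp hLR'disj (Finset.mem_inter.mp h1).1
          (Finset.mem_inter.mp hh2).1
      · exact Finset.disjoint_left.mp hLR'disj (Finset.mem_inter.mp hh2).1
          (Finset.mem_inter.mp h1).1
      · exact Finset.disjoint_left.mp (hdisjimgL g) (Finset.mem_inter.mp hh2).2
          (Finset.mem_inter.mp h1).2
    have hd34 : Disjoint B3 B4 := by
      rw [Finset.disjoint_left]
      intro a ha hb
      rcases Finset.mem_union.mp ha with h1 | h1 <;> rcases Finset.mem_union.mp hb with hh2 | hh2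
      · exact Finset.disjoint_left.mp (hdisjimgR g) (Finset.mem_inter.mp hh2).2
          (Finset.mem_inter.mp h1).2
      · exact Finset.disjoint_left.mp hLR'disj (Finset.mem_inter.mp hh2).1
          (Finset.mem_inter.mp h1).1
      · exact Finset.disjoint_left.mp hLR'disj (Finset.mem_inter.mp h1).1
          (Finset.mem_inter.mp hh2).1
      · exact Finset.disjoint_left.mp (hdisjimgL g) (Finset.mem_inter.mp h1).2
          (Finset.mem_inter.mp hh2).2
    have hc12 : B1.card + B2.card ≤ n := by
      rw [← Finset.card_union_of_disjoint hd12, hndef, ← Finset.card_univ]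
      exact Finset.card_le_card (Finset.subset_univ _)
    have hc34 : B3.card + B4.card ≤ n := by
      rw [← Finset.card_union_of_disjoint hd34, hndef, ← Finset.card_univ]
      exact Finset.card_le_card (Finset.subset_univ _)
    have hsm12 : h * (B1.card:ℝ) ≤ 3 * b ∨ h * (B2.card:ℝ) ≤ 3 * b := by
      by_cases hc : 2 * B1.card ≤ n
      · exact Or.inl (hsmallT B1 hc hB1bd)
      · exact Or.inr (hsmallT B2 (by omega) hB2bd)
    have hsm34 : h * (B3.card:ℝ) ≤ 3 * b ∨ h * (B4.card:ℝ) ≤ 3 * b := by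
      by_cases hc : 2 * B3.card ≤ n
      · exact Or.inl (hsmallT B3 hc hB3bd)
      · exact Or.inr (hsmallT B4 (by omega) hB4bd)
    -- piece bounds
    have piece : ∀ T B : Finset X, T ⊆ B → h * (B.card:ℝ) ≤ 3 * b → h * (T.card:ℝ) ≤ 3 * b := by
      intro T B hTB hB
      refine le_trans ?_ hB
      apply mul_le_mul_of_nonneg_left _ h0
      exact_mod_cast Finset.card_le_card hTB
    -- counting identities for exclusions
    have hRid : (R'.image (fun z => z * g)).card = R'.card :=
      Finset.card_image_of_injective _ (mul_left_injective g)
    have hLid : (L'.image (fun z => z * g)).card = L'.card :=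
      Finset.card_image_of_injective _ (mul_left_injective g)
    have hexclR : h * ((L' ∩ R'.image (fun z => z * g)).card : ℝ) ≤ 3 * b →
        h * ((R' ∩ R'.image (fun z => z * g)).card : ℝ) ≤ 3 * b → False := by
      intro e1 e2
      have hp := hpart (R'.image (fun z => z * g))
      rw [hRid] at hp
      have hp1 : ((R'.image (fun z => z * g)) ∩ L').card = (L' ∩ R'.image (fun z => z * g)).card := by
        rw [Finset.inter_comm]
      have hp2 : ((R'.image (fun z => z * g)) ∩ R').card = (R' ∩ R'.image (fun z => z * g)).card := by
        rw [Finset.inter_comm]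
      have hp3 : ((R'.image (fun z => z * g)) ∩ M).card ≤ M.card :=
        Finset.card_le_card (Finset.inter_subset_right)
      -- h * R'.card ≤ 9b
      have hr9 : h * (R'.card:ℝ) ≤ 9 * b := by
        have hcast : (R'.card:ℝ) ≤ ((L' ∩ R'.image (fun z => z * g)).card : ℝ)
            + ((R' ∩ R'.image (fun z => z * g)).card : ℝ) + (M.card : ℝ) := by
          rw [hp1, hp2] at hp
          exact_mod_cast le_trans hp (by omega)
        nlinarith [hMreal, h0]
      -- lower bound : h*n ≤ 2*h*r + h*b + h*M
      have hlow : (n:ℝ) ≤ 2 * (R'.card:ℝ) + (b:ℝ) + (M.card:ℝ) := by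
        have : n ≤ 2 * R'.card + b + M.card := by
          have := hbal1; have := hDb; omega
        exact_mod_cast this
      have := mul_le_mul_of_nonneg_left hlow h0
      nlinarith [hMreal, hr9, hn400, hb0, h0, h2]
    have hexclL : h * ((R' ∩ L'.image (fun z => z * g)).card : ℝ) ≤ 3 * b →
        h * ((L' ∩ L'.image (fun z => z * g)).card : ℝ) ≤ 3 * b → False := by
      intro e1 e2
      have hp := hpart (L'.image (fun z => z * g))
      rw [hLid] at hp
      have hp1 : ((L'.image (fun z => z * g)) ∩ L').card = (L' ∩ L'.image (fun z => z * g)).card := by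
        rw [Finset.inter_comm]
      have hp2 : ((L'.image (fun z => z * g)) ∩ R').card = (R' ∩ L'.image (fun z => z * g)).card := by
        rw [Finset.inter_comm]
      have hp3 : ((L'.image (fun z => z * g)) ∩ M).card ≤ M.card :=
        Finset.card_le_card (Finset.inter_subset_right)
      have hl9 : h * (L'.card:ℝ) ≤ 9 * b := by
        have hcast : (L'.card:ℝ) ≤ ((L' ∩ L'.image (fun z => z * g)).card : ℝ)
            + ((R' ∩ L'.image (fun z => z * g)).card : ℝ) + (M.card : ℝ) := by
          rw [hp1, hp2] at hp
          exact_mod_cast le_trans hp (by omega)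
        nlinarith [hMreal, h0]
      have hlow : (n:ℝ) ≤ 2 * (L'.card:ℝ) + (b:ℝ) + (M.card:ℝ) := by
        have : n ≤ 2 * L'.card + b + M.card := by
          have := hbal2; have := hDb; omega
        exact_mod_cast this
      have := mul_le_mul_of_nonneg_left hlow h0
      nlinarith [hMreal, hl9, hn400, hb0, h0, h2]
    rcases hsm12 with s1 | s2 <;> rcases hsm34 with s3 | s4
    · exact Or.inr ⟨piece _ B1 Finset.subset_union_left s1, piece _ B3 Finset.subset_union_left s3⟩
    · exact absurd trivial (fun _ => hexclL (piece _ B4 Finset.subset_union_left s4)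
        (piece _ B1 Finset.subset_union_left s1))
    · exact absurd trivial (fun _ => hexclR (piece _ B2 Finset.subset_union_left s2)
        (piece _ B3 Finset.subset_union_left s3))
    · exact Or.inl ⟨piece _ B2 Finset.subset_union_left s2, piece _ B4 Finset.subset_union_left s4⟩
  -- the subgroup generated by S⁻¹S is everything
  set sig : Set X := {g : X | ∃ s ∈ S, ∃ t ∈ S, s⁻¹ * t = g} with hsigdef
  set K : Subgroup X := Subgroup.closure sig with hKdef
  have conjK : ∀ a : X, ∀ x ∈ K, a * x * a⁻¹ ∈ K := by
    intro a x hx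
    refine Subgroup.closure_induction ?_ ?_ ?_ ?_ hx
    · rintro z ⟨s, hs, t, ht, rfl⟩
      apply Subgroup.subset_closure
      refine ⟨a * s * a⁻¹, hS a s hs, a * t * a⁻¹, hS a t ht, ?_⟩
      group
    · have e : a * 1 * a⁻¹ = 1 := by group
      rw [e]; exact one_mem _
    · intro z w _ _ hz hw
      have e : a * (z * w) * a⁻¹ = (a * z * a⁻¹) * (a * w * a⁻¹) := by group
      rw [e]; exact mul_mem hz hw
    · intro z _ hz
      have e : a * z⁻¹ * a⁻¹ = (a * z * a⁻¹)⁻¹ := by group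
      rw [e]; exact inv_mem hz
  set V₀ : Finset X := Finset.univ.filter (fun x => x ∈ K ∨ ∃ s ∈ S, s⁻¹ * x ∈ K) with hV₀def
  have hV₀closed : outBd A V₀ = ∅ := by
    rw [Finset.eq_empty_iff_forall_notMem]
    intro y hy
    simp only [outBd, Finset.mem_filter] at hy
    obtain ⟨-, hyn, x, hxV, hxy⟩ := hy
    have hxV' := (Finset.mem_filter.mp hxV).2
    apply hyn
    refine Finset.mem_filter.mpr ⟨Finset.mem_univ y, ?_⟩
    have hxyS : x * y ∈ S := hxy
    rcases hxV' with hxK | ⟨s, hs, hsx⟩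
    · right
      refine ⟨x * y, hxyS, ?_⟩
      have e : (x * y)⁻¹ * y = y⁻¹ * x⁻¹ * (y⁻¹)⁻¹ := by group
      rw [e]
      exact conjK y⁻¹ x⁻¹ (inv_mem hxK)
    · left
      have e : y = (s⁻¹ * x)⁻¹ * (s⁻¹ * (x * y)) := by group
      rw [e]
      exact mul_mem (inv_mem hsx) (Subgroup.subset_closure ⟨s, hs, x * y, hxyS, rfl⟩)
  have hV₀univ : ∀ z : X, z ∈ V₀ := by
    by_contra hne'
    push_neg at hne'
    obtain ⟨z₀, hz₀⟩ := hne'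
    have hV₀ne : V₀.Nonempty :=
      ⟨1, Finset.mem_filter.mpr ⟨Finset.mem_univ 1, Or.inl (one_mem _)⟩⟩
    by_cases hcV : 2 * V₀.card ≤ n
    · have hmul := hOut_mul_le A V₀ hV₀ne (by rw [← hndef]; exact hcV)
      rw [← hhdef, hV₀closed] at hmul
      simp at hmul
      have hcpos : (0:ℝ) < (V₀.card : ℝ) := by exact_mod_cast hV₀ne.card_pos
      have := mul_pos hpos hcpos
      linarith
    · set T : Finset X := Finset.univ \ V₀ with hTdef
      have hTne : T.Nonempty := ⟨z₀, Finset.mem_sdiff.mpr ⟨Finset.mem_univ z₀, hz₀⟩⟩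
      have hTcard : T.card + V₀.card = n := by
        rw [hTdef, Finset.card_sdiff_of_subset (Finset.subset_univ _), Finset.card_univ, ← hndef]
        have : V₀.card ≤ n := by
          rw [hndef, ← Finset.card_univ]; exact Finset.card_le_card (Finset.subset_univ _)
        omega
      have hT2 : 2 * T.card ≤ Fintype.card X := by rw [← hndef]; omega
      have hTclosed : outBd A T = ∅ := by
        rw [Finset.eq_empty_iff_forall_notMem]
        intro y hy
        simp only [outBd, Finset.mem_filter] at hy
        obtain ⟨-, hyn, x, hxT, hxy⟩ := hy
        have hxV : x ∉ V₀ := (Finset.mem_sdiff.mp hxT).2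
        have hyV : y ∈ V₀ := by
          by_contra hc
          exact hyn (Finset.mem_sdiff.mpr ⟨Finset.mem_univ y, hc⟩)
        have : x ∈ outBd A V₀ := by
          simp only [outBd, Finset.mem_filter]
          exact ⟨Finset.mem_univ x, hxV, ⟨y, hyV, symm_mem hS hxy⟩⟩
        rw [hV₀closed] at this
        simp at this
      have hmul := hOut_mul_le A T hTne hT2
      rw [← hhdef, hTclosed] at hmul
      simp at hmul
      have hcpos : (0:ℝ) < (T.card : ℝ) := by exact_mod_cast hTne.card_pos
      have := mul_pos hpos hcpos
      linarith
  have Ktop : ∀ g : X, g ∈ K := by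
    by_contra hxk
    push_neg at hxk
    obtain ⟨x₀, hx₀⟩ := hxk
    have hSK : ∀ s ∈ S, s ∉ K := by
      intro s hs hsK
      have hx₀V := (Finset.mem_filter.mp (hV₀univ x₀)).2
      rcases hx₀V with hK | ⟨s', hs', h'⟩
      · exact hx₀ hK
      · apply hx₀
        have hgen : s'⁻¹ * s ∈ K := Subgroup.subset_closure ⟨s', hs', s, hs, rfl⟩
        have hinv' : s'⁻¹ ∈ K := by
          have e : s'⁻¹ = (s'⁻¹ * s) * s⁻¹ := by group
          rw [e]; exact mul_mem hgen (inv_mem hsK)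
        have e : x₀ = (s'⁻¹)⁻¹ * (s'⁻¹ * x₀) := by group
        rw [e]; exact mul_mem (inv_mem hinv') h'
    apply hnb
    refine ⟨fun z => decide (z ∈ K), ?_⟩
    intro x y hxy
    have hxyS : x * y ∈ S := hxy
    by_cases hx : x ∈ K <;> by_cases hy : y ∈ K
    · exfalso; exact hSK (x * y) hxyS (mul_mem hx hy)
    · simp [hx, hy]
    · simp [hx, hy]
    · exfalso
      have hxV := (Finset.mem_filter.mp (hV₀univ x)).2
      rcases hxV with hK | ⟨s, hs, hsx⟩
      · exact hx hK
      · apply hy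
        have e : y = (s⁻¹ * x)⁻¹ * (s⁻¹ * (x * y)) := by group
        rw [e]
        exact mul_mem (inv_mem hsx) (Subgroup.subset_closure ⟨s, hs, x * y, hxyS, rfl⟩)
  -- upper and lower counting bounds
  have hb2 : h * (b:ℝ) ≤ 2 * b := by nlinarith [mul_nonneg (sub_nonneg.mpr h2) hb0]
  have hLup : ∀ g : X, h * (L'.card:ℝ) ≤ h * ((L' ∩ L'.image (fun z => z * g)).card : ℝ)
      + h * ((R' ∩ L'.image (fun z => z * g)).card : ℝ) + 3 * b := by
    intro g
    have hp := hpart (L'.image (fun z => z * g))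
    rw [Finset.card_image_of_injective _ (mul_left_injective g)] at hp
    rw [Finset.inter_comm (L'.image (fun z => z * g)) L',
        Finset.inter_comm (L'.image (fun z => z * g)) R'] at hp
    have hp3 : ((L'.image (fun z => z * g)) ∩ M).card ≤ M.card :=
      Finset.card_le_card Finset.inter_subset_right
    have hcast : (L'.card:ℝ) ≤ ((L' ∩ L'.image (fun z => z * g)).card : ℝ)
        + ((R' ∩ L'.image (fun z => z * g)).card : ℝ) + (M.card : ℝ) := by
      exact_mod_cast le_trans hp (by omega)
    have := mul_le_mul_of_nonneg_left hcast h0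
    have e : h * (((L' ∩ L'.image (fun z => z * g)).card : ℝ)
        + ((R' ∩ L'.image (fun z => z * g)).card : ℝ) + (M.card : ℝ))
        = h * ((L' ∩ L'.image (fun z => z * g)).card : ℝ)
          + h * ((R' ∩ L'.image (fun z => z * g)).card : ℝ) + h * (M.card:ℝ) := by ring
    rw [e] at this
    linarith [hMreal]
  have hRup : ∀ g : X, h * (R'.card:ℝ) ≤ h * ((L' ∩ R'.image (fun z => z * g)).card : ℝ)
      + h * ((R' ∩ R'.image (fun z => z * g)).card : ℝ) + 3 * b := by
    intro g
    have hp := hpart (R'.image (fun z => z * g))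
    rw [Finset.card_image_of_injective _ (mul_left_injective g)] at hp
    rw [Finset.inter_comm (R'.image (fun z => z * g)) L',
        Finset.inter_comm (R'.image (fun z => z * g)) R'] at hp
    have hp3 : ((R'.image (fun z => z * g)) ∩ M).card ≤ M.card :=
      Finset.card_le_card Finset.inter_subset_right
    have hcast : (R'.card:ℝ) ≤ ((L' ∩ R'.image (fun z => z * g)).card : ℝ)
        + ((R' ∩ R'.image (fun z => z * g)).card : ℝ) + (M.card : ℝ) := by
      exact_mod_cast le_trans hp (by omega)
    have := mul_le_mul_of_nonneg_left hcast h0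
    have e : h * (((L' ∩ R'.image (fun z => z * g)).card : ℝ)
        + ((R' ∩ R'.image (fun z => z * g)).card : ℝ) + (M.card : ℝ))
        = h * ((L' ∩ R'.image (fun z => z * g)).card : ℝ)
          + h * ((R' ∩ R'.image (fun z => z * g)).card : ℝ) + h * (M.card:ℝ) := by ring
    rw [e] at this
    linarith [hMreal]
  have hLlow : h * (n:ℝ) ≤ 2 * (h * (L'.card:ℝ)) + 5 * b := by
    have hnat : n ≤ 2 * L'.card + b + M.card := by
      have := hbal2; have := hDb; omega
    have hcast : (n:ℝ) ≤ 2 * (L'.card:ℝ) + (b:ℝ) + (M.card:ℝ) := by exact_mod_cast hnat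
    have hmul := mul_le_mul_of_nonneg_left hcast h0
    have e : h * (2 * (L'.card:ℝ) + (b:ℝ) + (M.card:ℝ))
        = 2 * (h * (L'.card:ℝ)) + h * (b:ℝ) + h * (M.card:ℝ) := by ring
    rw [e] at hmul
    linarith [hMreal, hb2]
  have hRlow : h * (n:ℝ) ≤ 2 * (h * (R'.card:ℝ)) + 5 * b := by
    have hnat : n ≤ 2 * R'.card + b + M.card := by
      have := hbal1; have := hDb; omega
    have hcast : (n:ℝ) ≤ 2 * (R'.card:ℝ) + (b:ℝ) + (M.card:ℝ) := by exact_mod_cast hnat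
    have hmul := mul_le_mul_of_nonneg_left hcast h0
    have e : h * (2 * (R'.card:ℝ) + (b:ℝ) + (M.card:ℝ))
        = 2 * (h * (R'.card:ℝ)) + h * (b:ℝ) + h * (M.card:ℝ) := by ring
    rw [e] at hmul
    linarith [hMreal, hb2]
  -- base moves
  have sigbase : ∀ (P P₂ : Finset X),
      (∀ x ∈ P, ∀ y : X, x * y ∈ S → y ∈ P₂ ∪ D) →
      (∀ x ∈ P₂, ∀ y : X, x * y ∈ S → y ∈ P ∪ D) →
      ∀ s ∈ S, ∀ t ∈ S, ((P.image (fun z => z * (s⁻¹ * t))) \ P).card ≤ 2 * D.card := by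
    intro P P₂ hP hP₂ s hs t ht
    have hsub : (P.image (fun z => z * (s⁻¹ * t))) \ P ⊆
        ((P.filter (fun x => s * x⁻¹ ∈ D)) ∪ (P.filter (fun x => x * (s⁻¹ * t) ∈ D))).image
          (fun z => z * (s⁻¹ * t)) := by
      intro y hy
      obtain ⟨hyimg, hyP⟩ := Finset.mem_sdiff.mp hy
      obtain ⟨x, hxP, hxe⟩ := Finset.mem_image.mp hyimg
      by_cases h1 : s * x⁻¹ ∈ D
      · exact Finset.mem_image.mpr ⟨x, Finset.mem_union_left _ (Finset.mem_filter.mpr ⟨hxP, h1⟩), hxe⟩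
      by_cases hh2 : x * (s⁻¹ * t) ∈ D
      · exact Finset.mem_image.mpr ⟨x, Finset.mem_union_right _ (Finset.mem_filter.mpr ⟨hxP, hh2⟩), hxe⟩
      exfalso
      have hu : x * (s * x⁻¹) ∈ S := by
        have e : x * (s * x⁻¹) = x * s * x⁻¹ := by group
        rw [e]; exact hS x s hs
      have hu2 := hP x hxP _ hu
      rcases Finset.mem_union.mp hu2 with hu3 | hu3
      · have hv : (s * x⁻¹) * (x * (s⁻¹ * t)) ∈ S := by
          have e : (s * x⁻¹) * (x * (s⁻¹ * t)) = t := by group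
          rw [e]; exact ht
        have hv2 := hP₂ _ hu3 _ hv
        rcases Finset.mem_union.mp hv2 with hv3 | hv3
        · rw [hxe] at hv3; exact hyP hv3
        · exact hh2 hv3
      · exact h1 hu3
    have hinj1 : ((P.filter (fun x => s * x⁻¹ ∈ D))).card ≤ D.card := by
      apply Finset.card_le_card_of_injOn (fun x => s * x⁻¹)
      · intro a ha; exact (Finset.mem_filter.mp ha).2
      · intro a _ c _ hac
        simp only at hac
        have : a⁻¹ = c⁻¹ := mul_left_cancel hac
        simpa using this
    have hinj2 : ((P.filter (fun x => x * (s⁻¹ * t) ∈ D))).card ≤ D.card := by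
      apply Finset.card_le_card_of_injOn (fun x => x * (s⁻¹ * t))
      · intro a ha; exact (Finset.mem_filter.mp ha).2
      · intro a _ c _ hac
        simp only at hac
        exact mul_right_cancel hac
    calc ((P.image (fun z => z * (s⁻¹ * t))) \ P).card
        ≤ (((P.filter (fun x => s * x⁻¹ ∈ D)) ∪ (P.filter (fun x => x * (s⁻¹ * t) ∈ D))).image
            (fun z => z * (s⁻¹ * t))).card := Finset.card_le_card hsub
      _ ≤ ((P.filter (fun x => s * x⁻¹ ∈ D)) ∪ (P.filter (fun x => x * (s⁻¹ * t) ∈ D))).card :=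
          Finset.card_image_le
      _ ≤ 2 * D.card := by
          have := Finset.card_union_le (P.filter (fun x => s * x⁻¹ ∈ D))
            (P.filter (fun x => x * (s⁻¹ * t) ∈ D))
          omega
  -- composition subadditivity
  have comp : ∀ (P P₂ : Finset X), (∀ v : X, v ∈ P ∨ v ∈ P₂ ∨ v ∈ M) → ∀ a c : X,
      (P₂ ∩ P.image (fun u => u * (a * c))).card ≤
        (P₂ ∩ P.image (fun u => u * a)).card + (P₂ ∩ P.image (fun u => u * c)).card + M.card := by
    intro P P₂ htot a c
    have himg : P.image (fun u => u * (a * c)) = (P.image (fun u => u * a)).image (fun u => u * c) := by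
      rw [Finset.image_image]
      congr 1
      funext u
      simp [mul_assoc]
    rw [himg]
    have hsub : P₂ ∩ (P.image (fun u => u * a)).image (fun u => u * c) ⊆
        (((P.image (fun u => u * a)) ∩ P₂).image (fun u => u * c))
          ∪ (P₂ ∩ P.image (fun u => u * c)) ∪ (M.image (fun u => u * c)) := by
      intro y hy
      obtain ⟨hyP₂, hyimg⟩ := Finset.mem_inter.mp hy
      obtain ⟨z, hz, hze⟩ := Finset.mem_image.mp hyimg
      rcases htot z with hzc | hzc | hzc
      · refine Finset.mem_union_left _ (Finset.mem_union_right _ ?_)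
        refine Finset.mem_inter.mpr ⟨hyP₂, ?_⟩
        exact Finset.mem_image.mpr ⟨z, hzc, hze⟩
      · refine Finset.mem_union_left _ (Finset.mem_union_left _ ?_)
        exact Finset.mem_image.mpr ⟨z, Finset.mem_inter.mpr ⟨hz, hzc⟩, hze⟩
      · exact Finset.mem_union_right _ (Finset.mem_image.mpr ⟨z, hzc, hze⟩)
    calc (P₂ ∩ (P.image (fun u => u * a)).image (fun u => u * c)).card
        ≤ ((((P.image (fun u => u * a)) ∩ P₂).image (fun u => u * c))
            ∪ (P₂ ∩ P.image (fun u => u * c)) ∪ (M.image (fun u => u * c))).card :=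
          Finset.card_le_card hsub
      _ ≤ ((((P.image (fun u => u * a)) ∩ P₂).image (fun u => u * c))
            ∪ (P₂ ∩ P.image (fun u => u * c))).card + (M.image (fun u => u * c)).card :=
          Finset.card_union_le _ _
      _ ≤ (((P.image (fun u => u * a)) ∩ P₂).image (fun u => u * c)).card
            + (P₂ ∩ P.image (fun u => u * c)).card + (M.image (fun u => u * c)).card :=
          Nat.add_le_add_right (Finset.card_union_le _ _) _
      _ ≤ (P₂ ∩ P.image (fun u => u * a)).card + (P₂ ∩ P.image (fun u => u * c)).card + M.card := by
          have h1' : (((P.image (fun u => u * a)) ∩ P₂).image (fun u => u * c)).card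
              ≤ (P₂ ∩ (P.image (fun u => u * a))).card :=
            le_trans Finset.card_image_le (le_of_eq (by rw [Finset.inter_comm]))
          have h2' : (M.image (fun u => u * c)).card ≤ M.card := Finset.card_image_le
          omega
  -- inversion symmetry
  have hinvcard : ∀ (P P₂ : Finset X) (a : X),
      (P₂ ∩ P.image (fun u => u * a⁻¹)).card = (P ∩ P₂.image (fun u => u * a)).card := by
    intro P P₂ a
    refine Finset.card_bij' (fun x _ => x * a) (fun y _ => y * a⁻¹) ?_ ?_ ?_ ?_
    · intro x hx
      show x * a ∈ P ∩ P₂.image (fun u => u * a)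
      obtain ⟨hxP₂, hximg⟩ := Finset.mem_inter.mp hx
      obtain ⟨p, hp, hpe⟩ := Finset.mem_image.mp hximg
      refine Finset.mem_inter.mpr ⟨?_, Finset.mem_image.mpr ⟨x, hxP₂, rfl⟩⟩
      have e : x * a = p := by rw [← hpe]; group
      rw [e]; exact hp
    · intro y hy
      show y * a⁻¹ ∈ P₂ ∩ P.image (fun u => u * a⁻¹)
      obtain ⟨hyP, hyimg⟩ := Finset.mem_inter.mp hy
      obtain ⟨q, hq, hqe⟩ := Finset.mem_image.mp hyimg
      refine Finset.mem_inter.mpr ⟨?_, Finset.mem_image.mpr ⟨y, hyP, rfl⟩⟩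
      have e : y * a⁻¹ = q := by rw [← hqe]; group
      rw [e]; exact hq
    · intro x _; simp
    · intro y _; simp
  -- the main induction : every translate is color-preserving
  have EA : ∀ g : X, h * ((L' ∩ R'.image (fun z => z * g)).card : ℝ) ≤ 3 * b ∧
      h * ((R' ∩ L'.image (fun z => z * g)).card : ℝ) ≤ 3 * b := by
    intro g
    have hgK : g ∈ Subgroup.closure sig := Ktop g
    refine Subgroup.closure_induction ?_ ?_ ?_ ?_ hgK
    · rintro z ⟨s, hs, t, ht, rfl⟩
      have hbase1 : (L' ∩ R'.image (fun u => u * (s⁻¹ * t))).card ≤ 2 * D.card := by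
        refine le_trans (Finset.card_le_card ?_) (sigbase R' L' hR'adj hL'adj s hs t ht)
        intro x hx
        obtain ⟨hxL, hximg⟩ := Finset.mem_inter.mp hx
        exact Finset.mem_sdiff.mpr ⟨hximg, fun hc => Finset.disjoint_left.mp hLR'disj hxL hc⟩
      rcases key (s⁻¹ * t) with hE | hO
      · exact hE
      · exfalso
        have hc1 : ((L' ∩ R'.image (fun u => u * (s⁻¹ * t))).card : ℝ) ≤ 2 * (b:ℝ) := by
          have hn' : (L' ∩ R'.image (fun u => u * (s⁻¹ * t))).card ≤ 2 * b := by
            have := hDb; omega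
          exact_mod_cast hn'
        have hc2 : h * ((L' ∩ R'.image (fun u => u * (s⁻¹ * t))).card : ℝ) ≤ 4 * b := by
          have hm := mul_le_mul_of_nonneg_left hc1 h0
          have e : h * (2*(b:ℝ)) = 2*(h*(b:ℝ)) := by ring
          rw [e] at hm
          linarith [hb2]
        have hup := hRup (s⁻¹ * t)
        linarith [hO.2, hn400, hb0, hRlow]
    · constructor
      · have hie : L' ∩ R'.image (fun z => z * (1:X)) = ∅ := by
          rw [Finset.eq_empty_iff_forall_notMem]
          intro x hx
          obtain ⟨h1', h2'⟩ := Finset.mem_inter.mp hx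
          obtain ⟨r, hr, hre⟩ := Finset.mem_image.mp h2'
          rw [mul_one] at hre
          exact Finset.disjoint_left.mp hLR'disj h1' (hre ▸ hr)
        rw [hie, Finset.card_empty]
        have hz : (0:ℝ) ≤ 3*(b:ℝ) := by positivity
        simpa using hz
      · have hie : R' ∩ L'.image (fun z => z * (1:X)) = ∅ := by
          rw [Finset.eq_empty_iff_forall_notMem]
          intro x hx
          obtain ⟨h1', h2'⟩ := Finset.mem_inter.mp hx
          obtain ⟨r, hr, hre⟩ := Finset.mem_image.mp h2'
          rw [mul_one] at hre
          exact Finset.disjoint_left.mp hLR'disj (hre ▸ hr) h1'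
        rw [hie, Finset.card_empty]
        have hz : (0:ℝ) ≤ 3*(b:ℝ) := by positivity
        simpa using hz
    · intro z w hzm hwm ihz ihw
      have htot1 : ∀ v : X, v ∈ R' ∨ v ∈ L' ∨ v ∈ M := by
        intro v; rcases hzpart v with hv | hv | hv
        · exact Or.inr (Or.inl hv)
        · exact Or.inl hv
        · exact Or.inr (Or.inr hv)
      have htot2 : ∀ v : X, v ∈ L' ∨ v ∈ R' ∨ v ∈ M := hzpart
      have hc1 := comp R' L' htot1 z w
      have hc2 := comp L' R' htot2 z w
      have hr1 : h * ((L' ∩ R'.image (fun u => u * (z*w))).card : ℝ) ≤ 9 * b := by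
        have hcast : ((L' ∩ R'.image (fun u => u * (z*w))).card:ℝ) ≤
            ((L' ∩ R'.image (fun u => u * z)).card:ℝ)
            + ((L' ∩ R'.image (fun u => u * w)).card:ℝ) + (M.card:ℝ) := by
          exact_mod_cast hc1
        have hm := mul_le_mul_of_nonneg_left hcast h0
        have e : h * (((L' ∩ R'.image (fun u => u * z)).card:ℝ)
            + ((L' ∩ R'.image (fun u => u * w)).card:ℝ) + (M.card:ℝ))
            = h * ((L' ∩ R'.image (fun u => u * z)).card:ℝ)
              + h * ((L' ∩ R'.image (fun u => u * w)).card:ℝ) + h * (M.card:ℝ) := by ring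
        rw [e] at hm
        linarith [ihz.1, ihw.1, hMreal]
      rcases key (z * w) with hE | hO
      · exact hE
      · exfalso
        have hup := hRup (z * w)
        linarith [hO.2, hr1, hn400, hb0, hRlow]
    · intro z hzm ihz
      constructor
      · rw [show (fun u : X => u * z⁻¹) = (fun u : X => u * z⁻¹) from rfl, hinvcard R' L' z]
        exact ihz.2
      · rw [hinvcard L' R' z]
        exact ihz.1
  -- summation and final contradiction
  have hfilter : ∀ g : X, L' ∩ R'.image (fun z => z * g) = L'.filter (fun x => x * g⁻¹ ∈ R') := by
    intro g
    ext x
    simp only [Finset.mem_inter, Finset.mem_filter, Finset.mem_image]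
    constructor
    · rintro ⟨hxL, r, hr, hre⟩
      subst hre
      exact ⟨hxL, by simpa using hr⟩
    · rintro ⟨hxL, hxR⟩
      exact ⟨hxL, x * g⁻¹, hxR, by simp⟩
  have hcount : ∑ g : X, (L' ∩ R'.image (fun z => z * g)).card = L'.card * R'.card := by
    calc ∑ g : X, (L' ∩ R'.image (fun z => z * g)).card
        = ∑ g : X, (L'.filter (fun x => x * g⁻¹ ∈ R')).card :=
          Finset.sum_congr rfl (fun g _ => by rw [hfilter g])
      _ = ∑ g : X, ∑ x ∈ L', if x * g⁻¹ ∈ R' then 1 else 0 :=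
          Finset.sum_congr rfl (fun g _ => by rw [Finset.card_filter])
      _ = ∑ x ∈ L', ∑ g : X, if x * g⁻¹ ∈ R' then 1 else 0 := Finset.sum_comm
      _ = ∑ x ∈ L', (Finset.univ.filter (fun g : X => x * g⁻¹ ∈ R')).card :=
          Finset.sum_congr rfl (fun x _ => by rw [Finset.card_filter])
      _ = ∑ _x ∈ L', R'.card := by
          refine Finset.sum_congr rfl (fun x _ => ?_)
          refine Finset.card_bij' (fun g _ => x * g⁻¹) (fun r _ => r⁻¹ * x) ?_ ?_ ?_ ?_
          · intro g hg
            show x * g⁻¹ ∈ R'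
            exact (Finset.mem_filter.mp hg).2
          · intro r hr
            show r⁻¹ * x ∈ Finset.univ.filter (fun g : X => x * g⁻¹ ∈ R')
            refine Finset.mem_filter.mpr ⟨Finset.mem_univ _, ?_⟩
            have e : x * (r⁻¹ * x)⁻¹ = r := by group
            rw [e]; exact hr
          · intro g _
            show (x * g⁻¹)⁻¹ * x = g
            group
          · intro r _
            show x * (r⁻¹ * x)⁻¹ = r
            group
      _ = L'.card * R'.card := by rw [Finset.sum_const, smul_eq_mul]
  have hfin1 : h * ((L'.card:ℝ) * (R'.card:ℝ)) ≤ 3 * (b:ℝ) * (n:ℝ) := by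
    have hc2 := congrArg (fun m : ℕ => (m:ℝ)) hcount
    push_cast at hc2
    have hsle : ∑ g : X, h * (((L' ∩ R'.image (fun z => z * g)).card:ℝ)) ≤
        ∑ _g : X, 3*(b:ℝ) := Finset.sum_le_sum (fun g _ => (EA g).1)
    rw [Finset.sum_const, Finset.card_univ, ← Finset.mul_sum, hc2, nsmul_eq_mul] at hsle
    have hnn : ((Fintype.card X : ℕ):ℝ) = (n:ℝ) := by rw [hndef]
    rw [hnn] at hsle
    linarith
  -- absolute bounds
  have hnR0 : (0:ℝ) < (n:ℝ) := by exact_mod_cast hn1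
  have babs : (b:ℝ) ≤ (n:ℝ)/200 := by
    have hup : h * (n:ℝ) ≤ 2 * n := by
      have := mul_le_mul_of_nonneg_right h2 hnR0.le
      linarith
    linarith [hn400]
  have hMabs : (M.card:ℝ) ≤ 3*(n:ℝ)/400 := by
    rcases Nat.eq_zero_or_pos b with hb | hb
    · have hbz : (b:ℝ) = 0 := by exact_mod_cast hb
      by_contra hcc
      push_neg at hcc
      have hMpos : (0:ℝ) < (M.card:ℝ) := lt_of_le_of_lt (by positivity) hcc
      have := mul_pos hpos hMpos
      rw [hbz] at hMreal
      linarith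
    · have hbpos : (0:ℝ) < (b:ℝ) := by exact_mod_cast hb
      have h14 : 400*(b:ℝ)*(M.card:ℝ) ≤ 3*(b:ℝ)*(n:ℝ) := by
        have hs1 : 400*(b:ℝ)*(M.card:ℝ) ≤ (h*(n:ℝ))*(M.card:ℝ) :=
          mul_le_mul_of_nonneg_right hn400.le (by positivity)
        have hs2 : (h*(n:ℝ))*(M.card:ℝ) = (n:ℝ)*(h*(M.card:ℝ)) := by ring
        have hs3 : (n:ℝ)*(h*(M.card:ℝ)) ≤ (n:ℝ)*(3*(b:ℝ)) :=
          mul_le_mul_of_nonneg_left hMreal hnR0.le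
        nlinarith
      nlinarith [h14, hbpos]
  have hlabs : (49:ℝ)/100*(n:ℝ) ≤ (L'.card:ℝ) := by
    have hnat : n ≤ 2 * L'.card + b + M.card := by
      have := hbal2; have := hDb; omega
    have hcast : (n:ℝ) ≤ 2*(L'.card:ℝ) + (b:ℝ) + (M.card:ℝ) := by exact_mod_cast hnat
    linarith [babs, hMabs]
  have hrabs : (49:ℝ)/100*(n:ℝ) ≤ (R'.card:ℝ) := by
    have hnat : n ≤ 2 * R'.card + b + M.card := by
      have := hbal1; have := hDb; omega
    have hcast : (n:ℝ) ≤ 2*(R'.card:ℝ) + (b:ℝ) + (M.card:ℝ) := by exact_mod_cast hnat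
    linarith [babs, hMabs]
  -- final contradiction
  have e1 : ((49:ℝ)/100*(n:ℝ))*((49:ℝ)/100*(n:ℝ)) ≤ (L'.card:ℝ)*(R'.card:ℝ) :=
    mul_le_mul hlabs hrabs (by positivity) (by positivity)
  have e2 : h * (((49:ℝ)/100*(n:ℝ))*((49:ℝ)/100*(n:ℝ))) ≤ h * ((L'.card:ℝ)*(R'.card:ℝ)) :=
    mul_le_mul_of_nonneg_left e1 h0
  have e3 : 400*(b:ℝ)*(n:ℝ) ≤ h*(n:ℝ)*(n:ℝ) :=
    mul_le_mul_of_nonneg_right hn400.le hnR0.le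
  have e4 : (0:ℝ) < h*(n:ℝ)*(n:ℝ) := by positivity
  nlinarith [hfin1, e2, e3, e4, hb0, hnR0]

end Main


/-- There is an absolute constant `C > 0` such that for every non-bipartite Cayley sum graph
`C_Σ(X,S)` of a finite group `X` with respect to a normal subset `S` (adjacency
`x ∼ y ↔ xy ∈ S`), one has `h_out ≤ C β_out`. -/
theorem cayleySum_hOut_le_betaOut :
    ∃ C > (0 : ℝ),
      ∀ (X : Type) [Group X] [Fintype X] (S : Finset X),
        (∀ x : X, ∀ s ∈ S, x * s * x⁻¹ ∈ S) →
        ¬ Bipartite (fun x y : X => x * y ∈ S) →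
        hOut (fun x y : X => x * y ∈ S) ≤ C * betaOut (fun x y : X => x * y ∈ S) := by
  refine ⟨400, by norm_num, ?_⟩
  intro X _ _ S hS hnb
  have hXne : Nonempty X := ⟨1⟩
  have hble : hOut (fun x y : X => x * y ∈ S) / 400 ≤ betaOut (fun x y : X => x * y ∈ S) := by
    rw [betaOut]
    apply le_csInf
    · refine ⟨_, Finset.univ, ∅, Finset.disjoint_empty_right _, ?_, rfl⟩
      simpa using (Finset.univ_nonempty : (Finset.univ : Finset X).Nonempty)
    · rintro r ⟨L, R, hdis, hne', rfl⟩
      have h' := main_aux S hS hnb L R hdis hne'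
      linarith
  have h400 : (0:ℝ) < 400 := by norm_num
  calc hOut (fun x y : X => x * y ∈ S)
      = 400 * (hOut (fun x y : X => x * y ∈ S) / 400) := by ring
    _ ≤ 400 * betaOut (fun x y : X => x * y ∈ S) := by
        apply mul_le_mul_of_nonneg_left hble h400.le
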